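/- If δ > 0, then the polynomial decision problem (∃ c₁, c₄ ∈ ℝ)(∀ ξ₁, ξ₂ ∈ ℝ): (1/2)ξ₂² + (3c₁ + α/2)ξ₁²ξ₂ + ((α−3)c₁ − 1/2)ξ₁⁴ + (2c₄ + δ/2)ξ₁ξ₂ + ((α−2)c₄ − 3δ/8)ξ₁³ ≥ 0 has a solution only if α = 1/2. -/

import Mathlib

theorem stmt_3 (δ α : ℝ) (hδ : 0 < δ)
    (hsol : ∃ c₁ c₄ : ℝ, ∀ ξ₁ ξ₂ : ℝ,
      (1 / 2) * ξ₂ ^ 2 + (3 * c₁ + α / 2) * ξ₁ ^ 2 * ξ₂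
        + ((α - 3) * c₁ - 1 / 2) * ξ₁ ^ 4
        + (2 * c₄ + δ / 2) * ξ₁ * ξ₂
        + ((α - 2) * c₄ - 3 * δ / 8) * ξ₁ ^ 3 ≥ 0) :
    α = 1 / 2 := by
  obtain ⟨c₁, c₄, h⟩ := hsol
  set A : ℝ := 3 * c₁ + α / 2 with hA
  set B : ℝ := (α - 3) * c₁ - 1 / 2 with hB
  set C : ℝ := 2 * c₄ + δ / 2 with hCdef
  set D : ℝ := (α - 2) * c₄ - 3 * δ / 8 with hDdef
  clear_value A B C D
  have key : ∀ t : ℝ, B * t ^ 4 + (D - A * C) * t ^ 3 - C ^ 2 / 2 * t ^ 2 ≥ 0 := by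
    intro t
    have h0 := h t (-(C * t))
    have e : 1 / 2 * (-(C * t)) ^ 2 + A * t ^ 2 * (-(C * t)) + B * t ^ 4
        + C * t * (-(C * t)) + D * t ^ 3
        = B * t ^ 4 + (D - A * C) * t ^ 3 - C ^ 2 / 2 * t ^ 2 := by ring
    linarith [h0, e.ge, e.le]
  have key2 : ∀ t : ℝ, 2 * B * t ^ 4 - C ^ 2 * t ^ 2 ≥ 0 := by
    intro t
    have h1 := key t
    have h2 := key (-t)
    have e : B * (-t) ^ 4 + (D - A * C) * (-t) ^ 3 - C ^ 2 / 2 * (-t) ^ 2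
        = B * t ^ 4 - (D - A * C) * t ^ 3 - C ^ 2 / 2 * t ^ 2 := by ring
    linarith [h1, h2, e.ge, e.le]
  -- Step 1 : C = 0
  have hC0 : C = 0 := by
    by_contra hC
    set u : ℝ := C / (2 * (1 + B ^ 2)) with hu
    have hden : (2 * (1 + B ^ 2)) ≠ 0 := by positivity
    have huC : 2 * (1 + B ^ 2) * u = C := by
      rw [hu]; field_simp
    have hu0 : u ≠ 0 := by
      intro h'
      rw [h'] at huC
      simp at huC
      exact hC huC.symm
    have hu2 : 0 < u ^ 2 := lt_of_le_of_ne (sq_nonneg u) (Ne.symm (pow_ne_zero 2 hu0))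
    have h3 := key2 u
    have hC2 : C ^ 2 = 4 * (1 + B ^ 2) ^ 2 * u ^ 2 := by
      rw [← huC]; ring
    have h4 : (2 * B - 4 * (1 + B ^ 2) ^ 2) * u ^ 4 ≥ 0 := by nlinarith [h3, hC2]
    have h5 : 2 * B - 4 * (1 + B ^ 2) ^ 2 < 0 := by
      nlinarith [sq_nonneg (2 * B - 1), sq_nonneg B, sq_nonneg (B ^ 2)]
    nlinarith [h4, h5, mul_pos hu2 hu2]
  -- Step 2 : D = 0
  have hD0 : D = 0 := by
    by_contra hD
    have key3 : ∀ t : ℝ, B * t ^ 4 + D * t ^ 3 ≥ 0 := by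
      intro t
      have h1 := key t
      rw [hC0] at h1
      have e : B * t ^ 4 + (D - A * 0) * t ^ 3 - 0 ^ 2 / 2 * t ^ 2
          = B * t ^ 4 + D * t ^ 3 := by ring
      linarith [h1, e.ge, e.le]
    set u : ℝ := -D / (2 * (1 + B ^ 2)) with hu
    have hden : (2 * (1 + B ^ 2)) ≠ 0 := by positivity
    have huD : 2 * (1 + B ^ 2) * u = -D := by
      rw [hu]; field_simp
    have hu0 : u ≠ 0 := by
      intro h'
      rw [h'] at huD
      simp at huD
      exact hD huD
    have hu2 : 0 < u ^ 2 := lt_of_le_of_ne (sq_nonneg u) (Ne.symm (pow_ne_zero 2 hu0))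
    have h3 := key3 u
    have hDu : D * u ^ 3 = -(2 * (1 + B ^ 2)) * u ^ 4 := by
      have hD' : D = -(2 * (1 + B ^ 2) * u) := by linarith [huD]
      rw [hD']; ring
    have h4 : (B - 2 * (1 + B ^ 2)) * u ^ 4 ≥ 0 := by nlinarith [h3, hDu]
    have h5 : B - 2 * (1 + B ^ 2) < 0 := by nlinarith [sq_nonneg (2 * B - 1)]
    nlinarith [h4, h5, mul_pos hu2 hu2]
  -- Step 3 : conclude
  have hC' : 2 * c₄ + δ / 2 = 0 := by rw [← hCdef]; exact hC0
  have hD' : (α - 2) * c₄ - 3 * δ / 8 = 0 := by rw [← hDdef]; exact hD0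
  have h6 : δ * (α - 1 / 2) = 0 := by
    linear_combination (-4 : ℝ) * hD' + 2 * (α - 2) * hC'
  rcases mul_eq_zero.mp h6 with h7 | h7
  · linarith
  · linarith
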